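/- Let a ∈ F_{2^n}^× and P = (x, y) a point on E: y² + xy = x³ + a over F_{2^n}. If Tr(x) = 0, λ is a solution of λ² + λ = x, x' = (y + x(λ+1))^{1/2} and y' = x'(x' + λ), then Q = (x', y') lies on E and [2]Q = P; conversely if P = [2]Q for some affine point Q then Tr(x) = 0. -/

import Mathlib

open WeierstrassCurve

/-- The curve `y² + xy = x³ + a` over a field. -/
def E2 {F : Type*} [Field F] (a : F) : WeierstrassCurve.Affine F :=
  { a₁ := 1, a₂ := 0, a₃ := 0, a₄ := 0, a₆ := a }

private lemma some_eq_some {F : Type*} [Field F] {W : WeierstrassCurve.Affine F}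
    {x₁ y₁ x₂ y₂ : F} (h₁ : W.Nonsingular x₁ y₁) (h₂ : W.Nonsingular x₂ y₂)
    (hx : x₁ = x₂) (hy : y₁ = y₂) :
    Affine.Point.some _ _ h₁ = Affine.Point.some _ _ h₂ := by
  subst hx; subst hy; rfl

private lemma tr_artin (n : ℕ) (z : GaloisField 2 n) :
    ∑ i ∈ Finset.range n, (z ^ 2 + z) ^ 2 ^ i = 0 := by
  rcases Nat.eq_zero_or_pos n with hn | hn
  · simp [hn]
  haveI : Fintype (GaloisField 2 n) := Fintype.ofFinite _
  have hzn : z ^ 2 ^ n = z := by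
    have hc : Fintype.card (GaloisField 2 n) = 2 ^ n := by
      rw [← Nat.card_eq_fintype_card, GaloisField.card 2 n hn.ne']
    calc z ^ 2 ^ n = z ^ Fintype.card (GaloisField 2 n) := by rw [hc]
      _ = z := FiniteField.pow_card z
  have key : ∀ i : ℕ, (z ^ 2 + z) ^ 2 ^ i = z ^ 2 ^ (i + 1) - z ^ 2 ^ i := by
    intro i
    rw [CharTwo.sub_eq_add, add_pow_char_pow, ← pow_mul, pow_succ, mul_comm (2 ^ i) 2]
  calc ∑ i ∈ Finset.range n, (z ^ 2 + z) ^ 2 ^ i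
      = ∑ i ∈ Finset.range n, (z ^ 2 ^ (i + 1) - z ^ 2 ^ i) := by
        exact Finset.sum_congr rfl fun i _ => key i
    _ = z ^ 2 ^ n - z ^ 2 ^ 0 := Finset.sum_range_sub (fun i => z ^ 2 ^ i) n
    _ = 0 := by rw [hzn, pow_zero, pow_one, sub_self]

open Classical in
/-- Let `a ∈ 𝔽_{2^n}ˣ` and `P = (x, y)` on `E : y² + xy = x³ + a`.
If `Tr(x) = 0`, `lam` solves `lam² + lam = x`, `x' = (y + x(lam+1))^{1/2}` and
`y' = x'(x' + lam)`, then `Q = (x', y')` lies on `E` and `[2]Q = P`; conversely if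
`P = [2]Q` for some affine point `Q` then `Tr(x) = 0`. -/
theorem point_halving (n : ℕ) (a x y : GaloisField 2 n) (ha : a ≠ 0)
    (hP : (E2 a).Nonsingular x y) :
    (∀ lam x' y' : GaloisField 2 n,
      (∑ i ∈ Finset.range n, x ^ 2 ^ i) = 0 →
      lam ^ 2 + lam = x →
      x' ^ 2 = y + x * (lam + 1) →
      y' = x' * (x' + lam) →
      (E2 a).Equation x' y' ∧
        ∀ hQ : (E2 a).Nonsingular x' y',
          2 • Affine.Point.some _ _ hQ = Affine.Point.some _ _ hP) ∧
    ((∃ (u v : GaloisField 2 n) (hQ : (E2 a).Nonsingular u v),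
        2 • Affine.Point.some _ _ hQ = Affine.Point.some _ _ hP) →
      (∑ i ∈ Finset.range n, x ^ 2 ^ i) = 0) := by
  have h2 : (2 : GaloisField 2 n) = 0 := by
    have := CharP.cast_eq_zero (GaloisField 2 n) 2
    exact_mod_cast this
  have heq : y ^ 2 + x * y = x ^ 3 + a := by
    have := (Affine.equation_iff (W := E2 a) x y).mp hP.1
    simp only [E2] at this
    linear_combination this
  constructor
  · intro lam x' y' _ hlam hx' hy'
    subst hy'
    have hEq : (E2 a).Equation x' (x' * (x' + lam)) := by
      rw [Affine.equation_iff]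
      simp only [E2]
      linear_combination (x' ^ 2 + y + x * (lam + 1) + x) * hx' + (x' ^ 2 + x ^ 2) * hlam +
        heq + (x' ^ 3 * lam + x ^ 3 + x ^ 2 * lam + x ^ 2 + x * y * lam + x * y) * h2
    refine ⟨hEq, fun hQ => ?_⟩
    have hx'0 : x' ≠ 0 := by
      intro h0
      have := (Affine.equation_iff (W := E2 a) x' (x' * (x' + lam))).mp hEq
      rw [h0] at this
      simp only [E2] at this
      apply ha
      linear_combination -this
    have hyne : x' * (x' + lam) ≠ (E2 a).negY x' (x' * (x' + lam)) := by
      simp only [Affine.negY, E2]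
      intro h
      apply hx'0
      linear_combination h - (x' * (x' + lam)) * h2
    have hden : x' * (x' + lam) - (E2 a).negY x' (x' * (x' + lam)) ≠ 0 :=
      sub_ne_zero.mpr hyne
    have hL : (E2 a).slope x' x' (x' * (x' + lam)) (x' * (x' + lam)) = lam := by
      rw [Affine.slope_of_Y_ne rfl hyne, div_eq_iff hden]
      simp only [Affine.negY, E2]
      linear_combination (x' ^ 2 - x' * lam - lam * x' ^ 2 - x' * lam ^ 2) * h2
    rw [two_smul, Affine.Point.add_self_of_Y_ne hyne]
    apply some_eq_some
    · rw [hL]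
      simp only [Affine.addX, E2]
      linear_combination hlam - x' * h2
    · rw [hL]
      simp only [Affine.addY, Affine.negAddY, Affine.addX, Affine.negY, E2]
      linear_combination (-1 : GaloisField 2 n) * hx' - (lam + 1) * hlam +
        (-lam * x - x - y + x' * lam + x') * h2
  · rintro ⟨u, v, hQ, h2Q⟩
    have hvne : v ≠ (E2 a).negY u v := by
      intro h
      rw [two_smul, Affine.Point.add_self_of_Y_eq h] at h2Q
      exact Affine.Point.some_ne_zero hP h2Q.symm
    rw [two_smul, Affine.Point.add_self_of_Y_ne hvne] at h2Q
    have hx : (E2 a).addX u u ((E2 a).slope u u v v) = x := by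
      injection h2Q
    set L := (E2 a).slope u u v v with hLdef
    have hxL : x = L ^ 2 + L := by
      rw [← hx]
      simp only [Affine.addX, E2]
      linear_combination (-u) * h2
    rw [hxL]
    exact tr_artin n L
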